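/- Let (T, r, β, γ) be a pre-tree-decomposition of a graph G and let (T', r') be a subtree of (T, r) all of whose edges are exact, with r' its minimal node. Then for every vertex v of G, the set of nodes t ∈ V(T') with v ∈ Δ(π_t) induces a connected subgraph of T'. Consequently, if r = r', then for every t ∈ V(T'), the sum over nodes s with r ≺ s ⪯ t of |Δ(π_s) \ Δ(π_{p_s})| equals |∪_{s ⪯ t} Δ(π_s)|. -/

import Mathlib

/-- The boundary `Δ(X)` of a set `X` of edges of `G`: vertices incident both
to an edge in `X` and to an edge of `G` not in `X`. -/
def edgeBoundary {V : Type*} (G : SimpleGraph V) (X : Set (Sym2 V)) : Set V :=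
  {v | (∃ e ∈ X, v ∈ e) ∧ ∃ e' ∈ G.edgeSet \ X, v ∈ e'}

/-- A node of a rooted tree is a leaf if it is not the root and has at most
one neighbour. -/
def IsLeafAt {T : Type*} (TG : SimpleGraph T) (r t : T) : Prop :=
  t ≠ r ∧ ∀ s s', TG.Adj t s → TG.Adj t s' → s = s'

/-- A rooted pre-tree-decomposition of a graph `G`: a rooted tree `(T, r)`
with bags `β : V(T) → 2^{V(G)}` and cones `γ` on directed tree edges,
satisfying (PD.1)–(PD.4). -/
structure PreTreeDec {V : Type*} (G : SimpleGraph V) where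
  T : Type
  TFin : Fintype T
  TG : SimpleGraph T
  isTree : TG.IsTree
  r : T
  bag : T → Set V
  cone : T → T → Set (Sym2 V)
  cone_subset : ∀ s t, TG.Adj s t → cone s t ⊆ G.edgeSet
  /-- (PD.1) the root has an empty bag, and for every connected component of
  `G` there is a child of the root whose cone is the edge set of that
  component. -/
  root_bag : bag r = ∅
  root_components : ∀ c : G.ConnectedComponent, ∃ t, TG.Adj r t ∧
    cone r t = {e | e ∈ G.edgeSet ∧ ∀ v ∈ e, G.connectedComponentMk v = c}
  /-- (PD.2) cones pointing to leaves contain at most one edge. -/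
  leaf_small : ∀ t ℓ, IsLeafAt TG r ℓ → TG.Adj t ℓ → (cone t ℓ).Subsingleton
  /-- (PD.3) at every node the cones towards the neighbours are pairwise
  disjoint; at internal nodes they cover `E(G)`; their boundary is contained
  in the bag. -/
  part_disjoint : ∀ t s s', TG.Adj t s → TG.Adj t s' → s ≠ s' →
    Disjoint (cone t s) (cone t s')
  part_cover : ∀ t, ¬ IsLeafAt TG r t → (⋃ s ∈ {s | TG.Adj t s}, cone t s) = G.edgeSet
  boundary_bag : ∀ t s, TG.Adj t s → edgeBoundary G (cone t s) ⊆ bag t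
  /-- (PD.4) the two cones of an edge are disjoint. -/
  opp_disjoint : ∀ s t, TG.Adj s t → Disjoint (cone s t) (cone t s)

/-- An edge `st` of a pre-tree-decomposition is exact if its two cones
partition `E(G)`. -/
def PreTreeDec.Exact {V : Type*} {G : SimpleGraph V} (D : PreTreeDec G) (s t : D.T) : Prop :=
  D.cone s t ∪ D.cone t s = G.edgeSet

/-- The ancestor order on the rooted tree of a pre-tree-decomposition:
`u ⪯ v` iff `u` lies on every walk from the root to `v` (equivalently, on the
unique path from `r` to `v`). -/
def PreTreeDec.anc {V : Type*} {G : SimpleGraph V} (D : PreTreeDec G) (u v : D.T) : Prop :=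
  ∀ p : D.TG.Walk D.r v, u ∈ p.support

/-- The boundary `Δ(π_t)` of the ordered partition of `E(G)` given by the
cones at node `t`. -/
def PreTreeDec.bnd {V : Type*} {G : SimpleGraph V} (D : PreTreeDec G) (t : D.T) : Set V :=
  {v | ∃ s, D.TG.Adj t s ∧ v ∈ edgeBoundary G (D.cone t s)}

/-! ### Auxiliary lemmas -/

namespace PreTreeDec

open SimpleGraph Walk Set

variable {V : Type*} {G : SimpleGraph V} (D : PreTreeDec G)

/-- The unique path between two nodes of the decomposition tree. -/
noncomputable def pathTo (a b : D.T) : D.TG.Walk a b :=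
  (D.isTree.existsUnique_path a b).choose

lemma pathTo_isPath (a b : D.T) : (D.pathTo a b).IsPath :=
  (D.isTree.existsUnique_path a b).choose_spec.1

lemma pathTo_unique {a b : D.T} (q : D.TG.Walk a b) (hq : q.IsPath) : q = D.pathTo a b :=
  (D.isTree.existsUnique_path a b).choose_spec.2 q hq

lemma pathTo_self (a : D.T) : D.pathTo a a = Walk.nil :=
  (D.pathTo_unique Walk.nil (by simp)).symm

lemma anc_iff {u v : D.T} : D.anc u v ↔ u ∈ (D.pathTo D.r v).support := by
  classical
  constructor
  · intro h; exact h _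
  · intro h w
    have hbp : w.bypass = D.pathTo D.r v := D.pathTo_unique w.bypass w.bypass_isPath
    exact w.support_bypass_subset (hbp ▸ h)

lemma anc_self (t : D.T) : D.anc t t := fun w => w.end_mem_support

lemma anc_root (t : D.T) : D.anc D.r t := fun w => w.start_mem_support

lemma cone_compl {a c : D.T} (h : D.TG.Adj a c) (hex : D.Exact a c) :
    D.cone c a = G.edgeSet \ D.cone a c := by
  apply Set.eq_of_subset_of_subset
  · intro e he
    exact ⟨D.cone_subset c a h.symm he,
      fun h' => Set.disjoint_left.mp (D.opp_disjoint a c h) h' he⟩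
  · rintro e ⟨heE, hne⟩
    rw [← hex] at heE
    rcases heE with h' | h'
    · exact absurd h' hne
    · exact h'

lemma edgeBoundary_compl {X : Set (Sym2 V)} (hX : X ⊆ G.edgeSet) :
    edgeBoundary G (G.edgeSet \ X) = edgeBoundary G X := by
  unfold edgeBoundary
  rw [Set.diff_diff_cancel_left hX]
  ext v
  exact and_comm

lemma boundary_symm {a c : D.T} (h : D.TG.Adj a c) (hex : D.Exact a c) :
    edgeBoundary G (D.cone a c) = edgeBoundary G (D.cone c a) := by
  rw [D.cone_compl h hex, edgeBoundary_compl (D.cone_subset a c h)]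

lemma all_edges_in {a c : D.T} (h : D.TG.Adj a c) (hex : D.Exact a c) {v : V}
    (hv : v ∈ D.bnd a) (hnb : v ∉ edgeBoundary G (D.cone a c)) :
    ∀ e ∈ G.edgeSet, v ∈ e → e ∈ D.cone c a := by
  obtain ⟨x, hax, ⟨e₁, he₁, hve₁⟩, e₂, he₂, hve₂⟩ := hv
  simp only [edgeBoundary, Set.mem_setOf_eq] at hnb
  rcases not_and_or.mp hnb with h1 | h2
  · push_neg at h1
    intro e heE hve
    rw [D.cone_compl h hex]
    exact ⟨heE, fun hin => h1 e hin hve⟩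
  · push_neg at h2
    exfalso
    have he₁c : e₁ ∈ D.cone a c := by
      by_contra hn
      exact h2 e₁ ⟨D.cone_subset a x hax he₁, hn⟩ hve₁
    have he₂c : e₂ ∈ D.cone a c := by
      by_contra hn
      exact h2 e₂ ⟨he₂.1, hn⟩ hve₂
    by_cases hxc : x = c
    · exact he₂.2 (hxc ▸ he₂c)
    · exact Set.disjoint_left.mp (D.part_disjoint a x c hax h hxc) he₁ he₁c

lemma not_bnd_of_all {c prev : D.T} (h : D.TG.Adj prev c) {v : V}
    (hall : ∀ e ∈ G.edgeSet, v ∈ e → e ∈ D.cone c prev) (hv : v ∈ D.bnd c) : False := by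
  obtain ⟨x, hcx, ⟨e₁, he₁, hve₁⟩, e₂, he₂, hve₂⟩ := hv
  by_cases hx : x = prev
  · subst hx
    exact he₂.2 (hall e₂ he₂.1 hve₂)
  · exact Set.disjoint_left.mp (D.part_disjoint c x prev hcx h.symm hx) he₁
      (hall e₁ (D.cone_subset c x hcx he₁) hve₁)

lemma cone_nest {prev c d : D.T} (h1 : D.TG.Adj prev c) (h2 : D.TG.Adj c d) (hne : prev ≠ d)
    (hex : D.Exact c d) : D.cone c prev ⊆ D.cone d c := by
  intro e he
  rw [D.cone_compl h2 hex]
  exact ⟨D.cone_subset c prev h1.symm he,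
    fun h' => Set.disjoint_left.mp (D.part_disjoint c prev d h1.symm h2 hne) he h'⟩

lemma no_escape {S : Set D.T}
    (hexact : ∀ s ∈ S, ∀ t ∈ S, D.TG.Adj s t → D.Exact s t) {v : V} :
    ∀ {c b : D.T} (w : D.TG.Walk c b), v ∈ D.bnd b → ∀ prev : D.T,
      (∀ u ∈ w.support, u ∈ S) → prev ∈ S →
      w.support.Nodup → prev ∉ w.support → D.TG.Adj prev c →
      (∀ e ∈ G.edgeSet, v ∈ e → e ∈ D.cone c prev) → False := by
  intro c b w
  induction w with
  | nil =>
    intro hvb prev _ _ _ _ hadj hall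
    exact D.not_bnd_of_all hadj hall hvb
  | @cons c d b h w ih =>
    intro hvb prev hS hpS hnd hpw hadj hall
    have hdS : d ∈ S := hS d (by simp)
    have hcS : c ∈ S := hS c (by simp)
    have hne : prev ≠ d := by
      rintro rfl
      exact hpw (by simp)
    have hex := hexact c hcS d hdS h
    have hall' : ∀ e ∈ G.edgeSet, v ∈ e → e ∈ D.cone d c :=
      fun e he hv => D.cone_nest hadj h hne hex (hall e he hv)
    have hnd' := List.nodup_cons.mp (by simpa using hnd)
    exact ih hvb c (fun u hu => hS u (by simp [hu])) hcS hnd'.2 hnd'.1 h hall'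

lemma bnd_along {S : Set D.T}
    (hexact : ∀ s ∈ S, ∀ t ∈ S, D.TG.Adj s t → D.Exact s t) {v : V} :
    ∀ {a b : D.T} (w : D.TG.Walk a b), w.IsPath → (∀ u ∈ w.support, u ∈ S) →
      v ∈ D.bnd a → v ∈ D.bnd b → ∀ u ∈ w.support, v ∈ D.bnd u := by
  intro a b w
  induction w with
  | nil =>
    intro _ _ ha _ u hu
    simp only [Walk.support_nil, List.mem_singleton] at hu
    subst hu; exact ha
  | @cons a d b h w ih =>
    intro hp hS ha hb u hu
    have haS : a ∈ S := hS a (by simp)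
    have hdS : d ∈ S := hS d (by simp)
    have hex := hexact a haS d hdS h
    have hnd := List.nodup_cons.mp (by simpa using hp.support_nodup)
    have hd : v ∈ D.bnd d := by
      by_cases hcb : v ∈ edgeBoundary G (D.cone a d)
      · exact ⟨a, h.symm, (D.boundary_symm h hex) ▸ hcb⟩
      · exact absurd (D.no_escape hexact w hb a (fun u hu => hS u (by simp [hu])) haS
          hnd.2 hnd.1 h (D.all_edges_in h hex ha hcb)) not_false
    simp only [Walk.support_cons, List.mem_cons] at hu
    rcases hu with rfl | hu
    · exact ha
    · exact ih hp.of_cons (fun u hu => hS u (by simp [hu])) hd hb u hu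

lemma walk_in_S {S : Set D.T} (hconn : (D.TG.induce S).Connected) {a b : D.T}
    (ha : a ∈ S) (hb : b ∈ S) :
    ∃ w : D.TG.Walk a b, w.IsPath ∧ ∀ u ∈ w.support, u ∈ S := by
  classical
  obtain ⟨p⟩ := hconn ⟨a, ha⟩ ⟨b, hb⟩
  let w0 : D.TG.Walk a b := p.map (SimpleGraph.Embedding.induce S).toHom
  refine ⟨w0.bypass, w0.bypass_isPath, fun u hu => ?_⟩
  have hmem := w0.support_bypass_subset hu
  have : u ∈ p.support.map (fun x : S => (x : D.T)) := by
    have hmem' : u ∈ (p.map (SimpleGraph.Embedding.induce S).toHom).support := hmem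
    rw [Walk.support_map] at hmem'
    exact hmem'
  obtain ⟨x, _, rfl⟩ := List.mem_map.mp this
  exact x.2

lemma reachable_induce {P : D.T → Prop} :
    ∀ {a b : D.T} (w : D.TG.Walk a b) (h : ∀ u ∈ w.support, P u),
      (D.TG.induce {t | P t}).Reachable ⟨a, h a w.start_mem_support⟩
        ⟨b, h b w.end_mem_support⟩ := by
  intro a b w
  induction w with
  | nil => intro h; exact Reachable.refl _
  | @cons a d b hadj w ih =>
    intro h
    have h1 : (D.TG.induce {t | P t}).Adj ⟨a, h a (by simp)⟩ ⟨d, h d (by simp)⟩ := hadj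
    exact h1.reachable.trans (ih (fun u hu => h u (by simp [hu])))

/-! ### Finiteness -/

/-- The set of nodes on the far side of `x` seen across the edge `s–x`. -/
def sideSet (s x : D.T) : Set D.T := {u | s ∉ (D.pathTo x u).support}

lemma adj_path_mem {s x t : D.T} (hx : D.TG.Adj s x) (ht : D.TG.Adj s t) (hxt : x ≠ t) :
    s ∈ (D.pathTo x t).support := by
  by_contra hs
  have h1 : (Walk.cons hx (D.pathTo x t)).IsPath :=
    (Walk.cons_isPath_iff _ _).mpr ⟨D.pathTo_isPath x t, hs⟩
  have h2 : (Walk.cons ht Walk.nil).IsPath := by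
    rw [Walk.cons_isPath_iff]
    simp [ht.ne]
  have heq := (D.pathTo_unique _ h1).trans (D.pathTo_unique _ h2).symm
  have hsupp := congrArg Walk.support heq
  simp only [Walk.support_cons, Walk.support_nil, List.cons.injEq, true_and] at hsupp
  have hx' : x ∈ (D.pathTo x t).support := Walk.start_mem_support _
  rw [hsupp] at hx'
  simp only [List.mem_singleton] at hx'
  exact hxt hx'

lemma side_ssubset {t s x : D.T} (hts : D.TG.Adj t s) (hsx : D.TG.Adj s x) (hxt : x ≠ t) :
    D.sideSet s x ⊂ D.sideSet t s := by
  classical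
  constructor
  · intro u hu
    have hpath : (Walk.cons hsx (D.pathTo x u)).IsPath :=
      (Walk.cons_isPath_iff _ _).mpr ⟨D.pathTo_isPath x u, hu⟩
    have heq : D.pathTo s u = Walk.cons hsx (D.pathTo x u) :=
      (D.pathTo_unique _ hpath).symm
    intro ht
    have ht' : t ∈ (Walk.cons hsx (D.pathTo x u)).support := heq ▸ ht
    simp only [Walk.support_cons, List.mem_cons] at ht'
    rcases ht' with h | h
    · exact hts.ne h
    · have htk : ((D.pathTo x u).takeUntil t h).IsPath :=
        (D.pathTo_isPath x u).takeUntil h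
      have heq2 : (D.pathTo x u).takeUntil t h = D.pathTo x t := D.pathTo_unique _ htk
      have hmem := D.adj_path_mem hsx hts.symm hxt
      rw [← heq2] at hmem
      exact hu (Walk.support_takeUntil_subset _ h hmem)
  · intro hsub
    have hs1 : s ∈ D.sideSet t s := by
      show t ∉ (D.pathTo s s).support
      rw [D.pathTo_self]
      simp only [Walk.support_nil, List.mem_singleton]
      exact hts.ne
    exact (hsub hs1) (Walk.end_mem_support _)

lemma cone_finite' : ∀ (n : ℕ) {t s : D.T}, D.TG.Adj t s → (D.sideSet t s).ncard ≤ n →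
    (D.cone t s).Finite := by
  haveI := D.TFin
  intro n
  induction n with
  | zero =>
    intro t s hadj hle
    exfalso
    have hs : s ∈ D.sideSet t s := by
      show t ∉ (D.pathTo s s).support
      rw [D.pathTo_self]
      simp only [Walk.support_nil, List.mem_singleton]
      exact hadj.ne
    have hpos : 0 < (D.sideSet t s).ncard :=
      (Set.ncard_pos (Set.toFinite _)).mpr ⟨s, hs⟩
    omega
  | succ n ih =>
    intro t s hadj hle
    by_cases hleaf : IsLeafAt D.TG D.r s
    · exact (D.leaf_small t s hleaf hadj).finite
    · have hcover := D.part_cover s hleaf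
      have hsub : D.cone t s ⊆ ⋃ x ∈ {x | D.TG.Adj s x ∧ x ≠ t}, D.cone s x := by
        intro e he
        have heE : e ∈ G.edgeSet := D.cone_subset t s hadj he
        rw [← hcover] at heE
        simp only [Set.mem_iUnion, Set.mem_setOf_eq, exists_prop] at heE ⊢
        obtain ⟨x, hx, hex⟩ := heE
        refine ⟨x, ⟨hx, ?_⟩, hex⟩
        intro hxt
        rw [hxt] at hex
        exact Set.disjoint_left.mp (D.opp_disjoint t s hadj) he hex
      apply Set.Finite.subset _ hsub
      apply Set.Finite.biUnion (Set.toFinite _)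
      rintro x ⟨hx1, hx2⟩
      apply ih hx1
      have hlt := Set.ncard_lt_ncard (D.side_ssubset hadj hx1 hx2) (Set.toFinite _)
      omega

lemma cone_finite {t s : D.T} (hadj : D.TG.Adj t s) : (D.cone t s).Finite :=
  D.cone_finite' (D.sideSet t s).ncard hadj le_rfl

lemma sym2_mem_finite (e : Sym2 V) : {v | v ∈ e}.Finite := by
  induction e using Sym2.ind with
  | _ a b =>
    apply Set.Finite.subset ((Set.finite_singleton b).insert a)
    intro v hv
    rcases Sym2.mem_iff.mp hv with rfl | rfl <;> simp

lemma bnd_finite (t : D.T) : (D.bnd t).Finite := by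
  haveI := D.TFin
  have h : D.bnd t ⊆ ⋃ s ∈ {s | D.TG.Adj t s}, ⋃ e ∈ D.cone t s, {v | v ∈ e} := by
    rintro v ⟨s, hadj, ⟨e, he, hve⟩, -⟩
    simp only [Set.mem_iUnion, Set.mem_setOf_eq, exists_prop]
    exact ⟨s, hadj, e, he, hve⟩
  apply Set.Finite.subset _ h
  apply Set.Finite.biUnion (Set.toFinite _)
  intro s hs
  exact Set.Finite.biUnion (D.cone_finite hs) (fun e _ => PreTreeDec.sym2_mem_finite (V := V) e)

/-! ### The root and ancestors -/

lemma bnd_root : D.bnd D.r = ∅ := by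
  ext v
  simp only [bnd, Set.mem_setOf_eq, Set.mem_empty_iff_false, iff_false]
  rintro ⟨s, hadj, hb⟩
  have := D.boundary_bag D.r s hadj hb
  rw [D.root_bag] at this
  exact this

lemma support_pathTo_subset {S : Set D.T} (hconn : (D.TG.induce S).Connected) {a b : D.T}
    (ha : a ∈ S) (hb : b ∈ S) : ∀ u ∈ (D.pathTo a b).support, u ∈ S := by
  obtain ⟨w, hw, hwS⟩ := D.walk_in_S hconn ha hb
  rw [D.pathTo_unique w hw] at hwS
  exact hwS

lemma part2 {S : Set D.T} (hr : D.r ∈ S) (hconn : (D.TG.induce S).Connected)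
    (hexact : ∀ s ∈ S, ∀ t ∈ S, D.TG.Adj s t → D.Exact s t) :
    ∀ (n : ℕ) (t : D.T), t ∈ S → (D.pathTo D.r t).length ≤ n →
      (∑ᶠ s ∈ {s | s ∈ S ∧ s ≠ D.r ∧ D.anc s t},
        Set.ncard (D.bnd s \ ⋃ p ∈ {p | D.TG.Adj p s ∧ D.anc p s ∧ p ≠ s}, D.bnd p)) =
      Set.ncard (⋃ s ∈ {s | s ∈ S ∧ D.anc s t}, D.bnd s) := by
  classical
  haveI := D.TFin
  have hA0 : {s | s ∈ S ∧ s ≠ D.r ∧ D.anc s D.r} = ∅ := by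
    ext s
    simp only [Set.mem_setOf_eq, Set.mem_empty_iff_false, iff_false, not_and]
    intro _ hne hanc
    have h := D.anc_iff.mp hanc
    rw [D.pathTo_self] at h
    simp only [Walk.support_nil, List.mem_singleton] at h
    exact hne h
  have hB0 : {s | s ∈ S ∧ D.anc s D.r} = {D.r} := by
    ext s
    simp only [Set.mem_setOf_eq, Set.mem_singleton_iff]
    constructor
    · rintro ⟨-, hanc⟩
      have h := D.anc_iff.mp hanc
      rw [D.pathTo_self] at h
      simpa using h
    · rintro rfl
      exact ⟨hr, D.anc_self _⟩
  have hbase : (∑ᶠ s ∈ {s | s ∈ S ∧ s ≠ D.r ∧ D.anc s D.r},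
        Set.ncard (D.bnd s \ ⋃ p ∈ {p | D.TG.Adj p s ∧ D.anc p s ∧ p ≠ s}, D.bnd p)) =
      Set.ncard (⋃ s ∈ {s | s ∈ S ∧ D.anc s D.r}, D.bnd s) := by
    rw [hA0, hB0, finsum_mem_empty, Set.biUnion_singleton, D.bnd_root, Set.ncard_empty]
  intro n
  induction n with
  | zero =>
    intro t ht hlen
    have hrt : D.r = t := Walk.eq_of_length_eq_zero (Nat.le_zero.mp hlen)
    subst hrt
    exact hbase
  | succ n ih =>
    intro t ht hlen
    by_cases htr : t = D.r
    · subst htr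
      exact hbase
    · have hqpath : (D.pathTo D.r t).IsPath := D.pathTo_isPath D.r t
      have hnn : ¬ (D.pathTo D.r t).reverse.Nil := by
        rw [Walk.nil_iff_length_eq, Walk.length_reverse]
        intro h0
        exact htr (Walk.eq_of_length_eq_zero h0).symm
      obtain ⟨d, hd, w', hw'⟩ := Walk.not_nil_iff.mp hnn
      have hq2 : D.pathTo D.r t = w'.reverse.concat hd.symm := by
        have h := congrArg Walk.reverse hw'
        rwa [Walk.reverse_reverse, Walk.reverse_cons] at h
      have hqp_path : w'.reverse.IsPath := by
        have h1 : ((D.pathTo D.r t).reverse).IsPath := hqpath.reverse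
        rw [hw'] at h1
        exact h1.of_cons.reverse
      have hpteq : D.pathTo D.r d = w'.reverse := (D.pathTo_unique _ hqp_path).symm
      have hsupp : (D.pathTo D.r t).support = w'.reverse.support ++ [t] := by
        rw [hq2, Walk.support_concat]
      have htnot : t ∉ w'.reverse.support := by
        have hnd := hqpath.support_nodup
        rw [hsupp] at hnd
        exact fun h => (List.disjoint_of_nodup_append hnd) h (by simp)
      have hlen' : (D.pathTo D.r d).length ≤ n := by
        have h1 : (D.pathTo D.r t).length = w'.reverse.length + 1 := by
          rw [hq2, Walk.length_concat]
        rw [hpteq]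
        omega
      have hanc_t : ∀ s, D.anc s t ↔ (D.anc s d ∨ s = t) := by
        intro s
        rw [D.anc_iff, D.anc_iff, hpteq, hsupp]
        simp [List.mem_append]
      have hSanc : ∀ s, D.anc s t → s ∈ S := fun s hs =>
        D.support_pathTo_subset hconn hr ht s (D.anc_iff.mp hs)
      have hdanc : D.anc d t := (hanc_t d).mpr (Or.inl (D.anc_self d))
      have hdS : d ∈ S := hSanc d hdanc
      have hdne : d ≠ t := fun h => htnot (h ▸ w'.reverse.end_mem_support)
      have hP : {p | D.TG.Adj p t ∧ D.anc p t ∧ p ≠ t} = {d} := by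
        ext x
        simp only [Set.mem_setOf_eq, Set.mem_singleton_iff]
        constructor
        · rintro ⟨hadj, hanc, hne⟩
          have hxq : x ∈ (D.pathTo D.r t).support := D.anc_iff.mp hanc
          have htq : t ∉ ((D.pathTo D.r t).takeUntil x hxq).support := by
            intro htq
            have hspec := (D.pathTo D.r t).take_spec hxq
            have hnd := hqpath.support_nodup
            rw [← hspec, Walk.support_append] at hnd
            refine (List.disjoint_of_nodup_append hnd) htq ?_
            have hend : t ∈ ((D.pathTo D.r t).dropUntil x hxq).support :=
              Walk.end_mem_support _
            rw [Walk.support_eq_cons ((D.pathTo D.r t).dropUntil x hxq)] at hend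
            rcases List.mem_cons.mp hend with h | h
            · exact absurd h.symm hne
            · exact h
          have hcp : (((D.pathTo D.r t).takeUntil x hxq).concat hadj).IsPath := by
            apply Walk.IsPath.mk'
            rw [Walk.support_concat, ← List.concat_eq_append]
            exact List.Nodup.concat htq (hqpath.takeUntil hxq).support_nodup
          have heqq : ((D.pathTo D.r t).takeUntil x hxq).concat hadj
              = w'.reverse.concat hd.symm := by
            rw [← hq2]
            exact D.pathTo_unique _ hcp
          obtain ⟨hv, -⟩ := Walk.concat_inj heqq
          exact hv
        · rintro rfl
          exact ⟨hd.symm, hdanc, hdne⟩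
      have hA : {s | s ∈ S ∧ s ≠ D.r ∧ D.anc s t}
          = insert t {s | s ∈ S ∧ s ≠ D.r ∧ D.anc s d} := by
        ext s
        simp only [Set.mem_setOf_eq, Set.mem_insert_iff]
        constructor
        · rintro ⟨hS, hne, hanc⟩
          rcases (hanc_t s).mp hanc with h | h
          · exact Or.inr ⟨hS, hne, h⟩
          · exact Or.inl h
        · rintro (hst | ⟨hS, hne, hanc⟩)
          · subst hst
            exact ⟨ht, htr, D.anc_self _⟩
          · exact ⟨hS, hne, (hanc_t s).mpr (Or.inl hanc)⟩
      have htA : t ∉ {s | s ∈ S ∧ s ≠ D.r ∧ D.anc s d} := by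
        rintro ⟨-, -, hanc⟩
        rw [D.anc_iff, hpteq] at hanc
        exact htnot hanc
      have hB : {s | s ∈ S ∧ D.anc s t} = insert t {s | s ∈ S ∧ D.anc s d} := by
        ext s
        simp only [Set.mem_setOf_eq, Set.mem_insert_iff]
        constructor
        · rintro ⟨hS, hanc⟩
          rcases (hanc_t s).mp hanc with h | h
          · exact Or.inr ⟨hS, h⟩
          · exact Or.inl h
        · rintro (hst | ⟨hS, hanc⟩)
          · subst hst
            exact ⟨ht, D.anc_self _⟩
          · exact ⟨hS, (hanc_t s).mpr (Or.inl hanc)⟩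
      have hUp_fin : (⋃ s ∈ {s | s ∈ S ∧ D.anc s d}, D.bnd s).Finite :=
        Set.Finite.biUnion (Set.toFinite _) (fun s _ => D.bnd_finite s)
      have hkey : D.bnd t \ (⋃ s ∈ {s | s ∈ S ∧ D.anc s d}, D.bnd s)
          = D.bnd t \ D.bnd d := by
        ext v
        simp only [Set.mem_diff]
        constructor
        · rintro ⟨hvt, hvU⟩
          exact ⟨hvt, fun hvd => hvU (Set.mem_biUnion ⟨hdS, D.anc_self d⟩ hvd)⟩
        · rintro ⟨hvt, hvd⟩
          refine ⟨hvt, fun hvU => hvd ?_⟩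
          simp only [Set.mem_iUnion, Set.mem_setOf_eq, exists_prop] at hvU
          obtain ⟨s, ⟨hsS, hancsd⟩, hvs⟩ := hvU
          have hs_sup : s ∈ w'.reverse.support := by
            rw [D.anc_iff, hpteq] at hancsd
            exact hancsd
          have hw1path : (w'.reverse.dropUntil s hs_sup).IsPath :=
            hqp_path.dropUntil hs_sup
          have hw1S : ∀ u ∈ (w'.reverse.dropUntil s hs_sup).support, u ∈ S := by
            intro u hu
            apply hSanc u
            rw [hanc_t]
            left
            rw [D.anc_iff, hpteq]
            exact Walk.support_dropUntil_subset _ hs_sup hu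
          have htW : t ∉ (w'.reverse.dropUntil s hs_sup).support :=
            fun h => htnot (Walk.support_dropUntil_subset _ hs_sup h)
          have hWpath : ((w'.reverse.dropUntil s hs_sup).concat hd.symm).IsPath := by
            apply Walk.IsPath.mk'
            rw [Walk.support_concat, ← List.concat_eq_append]
            exact List.Nodup.concat htW hw1path.support_nodup
          have hWS : ∀ u ∈ ((w'.reverse.dropUntil s hs_sup).concat hd.symm).support,
              u ∈ S := by
            intro u hu
            rw [Walk.support_concat, List.mem_append] at hu
            rcases hu with h | h
            · exact hw1S u h
            · simp only [List.mem_singleton] at h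
              exact h ▸ ht
          have hall := D.bnd_along hexact _ hWpath hWS hvs hvt
          apply hall d
          rw [Walk.support_concat, List.mem_append]
          exact Or.inl (Walk.end_mem_support _)
      rw [hA, hB, finsum_mem_insert _ htA (Set.toFinite _), Set.biUnion_insert,
        ih d hdS hlen']
      have hsplit : D.bnd t ∪ ⋃ s ∈ {s | s ∈ S ∧ D.anc s d}, D.bnd s
          = (D.bnd t \ ⋃ s ∈ {s | s ∈ S ∧ D.anc s d}, D.bnd s)
            ∪ ⋃ s ∈ {s | s ∈ S ∧ D.anc s d}, D.bnd s := by
        rw [Set.diff_union_self]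
      rw [hsplit, Set.ncard_union_eq Set.disjoint_sdiff_left
        (D.bnd_finite t).diff hUp_fin, hkey, hP, Set.biUnion_singleton]

end PreTreeDec

theorem exact_subtree_boundary_connected {V : Type*} (G : SimpleGraph V)
    (D : PreTreeDec G) (S : Set D.T) (r' : D.T) (hr' : r' ∈ S)
    (hconn : (D.TG.induce S).Connected)
    (hmin : ∀ t ∈ S, D.anc r' t)
    (hexact : ∀ s ∈ S, ∀ t ∈ S, D.TG.Adj s t → D.Exact s t) :
    (∀ v : V, ∀ t₁, ∀ h₁ : t₁ ∈ S, ∀ t₂, ∀ h₂ : t₂ ∈ S,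
      ∀ hv₁ : v ∈ D.bnd t₁, ∀ hv₂ : v ∈ D.bnd t₂,
      (D.TG.induce {t | t ∈ S ∧ v ∈ D.bnd t}).Reachable ⟨t₁, h₁, hv₁⟩ ⟨t₂, h₂, hv₂⟩) ∧
    (r' = D.r → ∀ t ∈ S,
      (∑ᶠ s ∈ {s | s ∈ S ∧ s ≠ D.r ∧ D.anc s t},
        Set.ncard (D.bnd s \ ⋃ p ∈ {p | D.TG.Adj p s ∧ D.anc p s ∧ p ≠ s}, D.bnd p)) =
      Set.ncard (⋃ s ∈ {s | s ∈ S ∧ D.anc s t}, D.bnd s)) := by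
  constructor
  · intro v t₁ h₁ t₂ h₂ hv₁ hv₂
    obtain ⟨w, hw, hwS⟩ := D.walk_in_S hconn h₁ h₂
    have hall := D.bnd_along hexact w hw hwS hv₁ hv₂
    exact D.reachable_induce w (fun u hu => ⟨hwS u hu, hall u hu⟩)
  · intro hroot t ht
    subst hroot
    exact D.part2 hr' hconn hexact (D.pathTo D.r t).length t ht le_rfl
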